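/- As λ → ∞, the ℓ₁ trend filter estimate μ̂(λ) = argmin { (1/2)Σ_{t=1}^n (y_t − μ_t)² + λ Σ_{t=3}^n |μ_t + μ_{t−2} − 2μ_{t−1}| } converges to the best affine (linear-in-t) least-squares fit of y; in particular, if λ exceeds a finite threshold λ_max (depending on y), then μ̂(λ) is exactly the affine least-squares fit. -/

import Mathlib

open Finset

private lemma tf_sum_id (n : ℕ) : ∑ t ∈ range n, (t:ℝ) = (n:ℝ)*((n:ℝ)-1)/2 := by
  induction n with
  | zero => simp
  | succ k ih => rw [sum_range_succ, ih]; push_cast; ring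

private lemma tf_sum_sq (n : ℕ) : ∑ t ∈ range n, (t:ℝ)^2 = (n:ℝ)*((n:ℝ)-1)*(2*(n:ℝ)-1)/6 := by
  induction n with
  | zero => simp
  | succ k ih => rw [sum_range_succ, ih]; push_cast; ring

/-- existence of the orthogonal projection coefficients -/
private lemma tf_exists_proj (n : ℕ) (hn : 3 ≤ n) (μ : ℕ → ℝ) :
    ∃ a b : ℝ, (∑ t ∈ range n, (μ t - (a + b*t))) = 0 ∧
               (∑ t ∈ range n, (t:ℝ) * (μ t - (a + b*t))) = 0 := by
  have hn3 : (3:ℝ) ≤ (n:ℝ) := by exact_mod_cast hn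
  set T1 : ℝ := ∑ t ∈ range n, (t:ℝ) with hT1
  set T2 : ℝ := ∑ t ∈ range n, (t:ℝ)^2 with hT2
  set M0 : ℝ := ∑ t ∈ range n, μ t with hM0
  set M1 : ℝ := ∑ t ∈ range n, (t:ℝ) * μ t with hM1
  have hdet : 0 < (n:ℝ) * T2 - T1^2 := by
    rw [hT1, hT2, tf_sum_id, tf_sum_sq]
    have key : (n:ℝ) * ((n:ℝ)*((n:ℝ)-1)*(2*(n:ℝ)-1)/6) - ((n:ℝ)*((n:ℝ)-1)/2)^2
        = (n:ℝ)^2*((n:ℝ)-1)*((n:ℝ)+1)/12 := by ring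
    rw [key]
    have h1 : (0:ℝ) < (n:ℝ) := by linarith
    have h2 : (0:ℝ) < (n:ℝ) - 1 := by linarith
    have h3 : (0:ℝ) < (n:ℝ) + 1 := by linarith
    positivity
  have hdet' : (n:ℝ) * T2 - T1^2 ≠ 0 := ne_of_gt hdet
  refine ⟨(T2*M0 - T1*M1)/((n:ℝ)*T2 - T1^2), ((n:ℝ)*M1 - T1*M0)/((n:ℝ)*T2 - T1^2), ?_, ?_⟩
  · have e : ∀ a b : ℝ, ∑ t ∈ range n, (μ t - (a + b*t)) = M0 - ((n:ℝ)*a + b*T1) := by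
      intro a b
      rw [Finset.sum_sub_distrib, Finset.sum_add_distrib, Finset.sum_const, ← Finset.mul_sum]
      simp [hM0, hT1, card_range]; try ring
    rw [e]; field_simp; try ring
  · have e : ∀ a b : ℝ, ∑ t ∈ range n, (t:ℝ) * (μ t - (a + b*t)) = M1 - (a*T1 + b*T2) := by
      intro a b
      have : ∀ t : ℕ, (t:ℝ) * (μ t - (a + b*t)) = (t:ℝ)*μ t - (a*(t:ℝ) + b*(t:ℝ)^2) := by
        intro t; ring
      rw [Finset.sum_congr rfl (fun t _ => this t), Finset.sum_sub_distrib,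
        Finset.sum_add_distrib, ← Finset.mul_sum, ← Finset.mul_sum]
      try simp [hM1, hT1, hT2]
    rw [e]; linear_combination (-M1) * mul_inv_cancel₀ hdet'

/-- orthogonality against any affine function -/
private lemma tf_ortho (n : ℕ) (w : ℕ → ℝ)
    (h0 : (∑ t ∈ range n, w t) = 0) (h1 : (∑ t ∈ range n, (t:ℝ) * w t) = 0)
    (c d : ℝ) : ∑ t ∈ range n, w t * (c + d*t) = 0 := by
  have : ∀ t : ℕ, w t * (c + d*t) = c * w t + d * ((t:ℝ) * w t) := by intro t; ring
  rw [Finset.sum_congr rfl (fun t _ => this t), Finset.sum_add_distrib,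
    ← Finset.mul_sum, ← Finset.mul_sum, h0, h1]
  ring

/-- key quantitative bound: distance from the affine interpolant is controlled
by the total variation of second differences -/
private lemma tf_rep_bound (n : ℕ) (w : ℕ → ℝ) (t : ℕ) (ht : t < n) :
    |w t - (w 0 + t * (w 1 - w 0))| ≤
      (n:ℝ) * ∑ s ∈ Ico 2 n, |w s + w (s-2) - 2*w (s-1)| := by
  set P : ℝ := ∑ s ∈ Ico 2 n, |w s + w (s-2) - 2*w (s-1)| with hPdef
  have hPnn : 0 ≤ P := Finset.sum_nonneg (fun _ _ => abs_nonneg _)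
  have hsum : w t - w 0 = ∑ u ∈ range t, (w (u+1) - w u) := (Finset.sum_range_sub w t).symm
  have hrw : w t - (w 0 + t * (w 1 - w 0)) = ∑ u ∈ range t, ((w (u+1) - w u) - (w 1 - w 0)) := by
    rw [Finset.sum_sub_distrib, ← hsum, Finset.sum_const, card_range, nsmul_eq_mul]; ring
  have hg : ∀ u : ℕ, (w (u+1) - w u) - (w 1 - w 0)
      = ∑ s ∈ range u, (w (s+2) + w s - 2*w (s+1)) := by
    intro u
    have := Finset.sum_range_sub (fun s => w (s+1) - w s) u
    have e : ∀ s : ℕ, (w (s+1+1) - w (s+1)) - (w (s+1) - w s) = w (s+2) + w s - 2*w (s+1) := by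
      intro s; try ring_nf
    calc (w (u+1) - w u) - (w 1 - w 0)
        = ∑ s ∈ range u, ((w (s+1+1) - w (s+1)) - (w (s+1) - w s)) := by rw [this]
      _ = ∑ s ∈ range u, (w (s+2) + w s - 2*w (s+1)) := Finset.sum_congr rfl (fun s _ => e s)
  have hinner : ∀ u : ℕ, u < t → |(w (u+1) - w u) - (w 1 - w 0)| ≤ P := by
    intro u hu
    rw [hg u]
    calc |∑ s ∈ range u, (w (s+2) + w s - 2*w (s+1))|
        ≤ ∑ s ∈ range u, |w (s+2) + w s - 2*w (s+1)| := Finset.abs_sum_le_sum_abs _ _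
      _ = ∑ s ∈ Ico 2 (u+2), |w s + w (s-2) - 2*w (s-1)| := by
          rw [Finset.sum_Ico_eq_sum_range]
          refine Finset.sum_congr (by simp) (fun s _ => ?_)
          have e1 : 2 + s - 2 = s := by omega
          have e2 : 2 + s - 1 = s + 1 := by omega
          rw [e1, e2]; ring_nf
      _ ≤ P := by
          refine Finset.sum_le_sum_of_subset_of_nonneg ?_ (fun _ _ _ => abs_nonneg _)
          exact Finset.Ico_subset_Ico le_rfl (by omega)
  calc |w t - (w 0 + t * (w 1 - w 0))|
      ≤ ∑ u ∈ range t, |(w (u+1) - w u) - (w 1 - w 0)| := by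
        rw [hrw]; exact Finset.abs_sum_le_sum_abs _ _
    _ ≤ ∑ _u ∈ range t, P := Finset.sum_le_sum (fun u hu => hinner u (mem_range.mp hu))
    _ = (t:ℝ) * P := by rw [Finset.sum_const, card_range, nsmul_eq_mul]
    _ ≤ (n:ℝ) * P := by
        have : (t:ℝ) ≤ (n:ℝ) := by exact_mod_cast le_of_lt ht
        nlinarith

/-- The ℓ₁ trend filtering objective (0-indexed: data `y 0, …, y (n-1)`;
the penalty runs over second differences `μ t + μ (t-2) - 2 μ (t-1)` for
`2 ≤ t ≤ n-1`, corresponding to `t = 3,…,n` in 1-indexed notation). -/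
noncomputable def tfObj (n : ℕ) (y : ℕ → ℝ) (lam : ℝ) (μ : ℕ → ℝ) : ℝ :=
  (1 / 2) * ∑ t ∈ Finset.range n, (y t - μ t) ^ 2 +
    lam * ∑ t ∈ Finset.Ico 2 n, |μ t + μ (t - 2) - 2 * μ (t - 1)|

set_option maxHeartbeats 1000000 in
/-- As `λ → ∞` the ℓ₁ trend filter converges to the best
affine fit: there is a finite threshold `λ_max` (depending on `y`) such that
for any `λ > λ_max`, any minimizer `μ̂` of the objective is affine in `t`
on `{0,…,n-1}` and is a least-squares affine fit of `y`. -/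
theorem trend_filter_large_lambda_affine_fit
    (n : ℕ) (hn : 3 ≤ n) (y : ℕ → ℝ) :
    ∃ lamMax : ℝ, ∀ lam : ℝ, lamMax < lam →
      ∀ μh : ℕ → ℝ, (∀ μ : ℕ → ℝ, tfObj n y lam μh ≤ tfObj n y lam μ) →
        ∃ a b : ℝ, (∀ t < n, μh t = a + b * t) ∧
          ∀ a' b' : ℝ,
            ∑ t ∈ Finset.range n, (y t - (a + b * t)) ^ 2 ≤
              ∑ t ∈ Finset.range n, (y t - (a' + b' * t)) ^ 2 := by
  classical
  set Y : ℝ := Real.sqrt (∑ t ∈ range n, (y t)^2) with hYdef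
  have hYnn : 0 ≤ Y := Real.sqrt_nonneg _
  refine ⟨(n:ℝ) * Real.sqrt n * Y, ?_⟩
  intro lam hlam μh hmin
  obtain ⟨a, b, hw0, hw1⟩ := tf_exists_proj n hn μh
  set w : ℕ → ℝ := fun t => μh t - (a + b*t) with hwdef
  set P : ℝ := ∑ s ∈ Ico 2 n, |w s + w (s-2) - 2*w (s-1)| with hPdef
  have hPnn : 0 ≤ P := Finset.sum_nonneg (fun _ _ => abs_nonneg _)
  -- second differences of affine functions vanish
  have haff : ∀ (c d : ℝ) (s : ℕ), 2 ≤ s →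
      (c + d*(s:ℝ)) + (c + d*((s-2 : ℕ):ℝ)) - 2*(c + d*((s-1 : ℕ):ℝ)) = 0 := by
    intro c d s hs
    rw [Nat.cast_sub (by omega : 2 ≤ s), Nat.cast_sub (by omega : 1 ≤ s)]
    push_cast; ring
  -- penalty of μh equals P
  have hpen : ∑ s ∈ Ico 2 n, |μh s + μh (s-2) - 2*μh (s-1)| = P := by
    refine Finset.sum_congr rfl (fun s hs => ?_)
    have h2 : 2 ≤ s := (Finset.mem_Ico.mp hs).1
    have e : μh s + μh (s-2) - 2*μh (s-1)
        = (w s + w (s-2) - 2*w (s-1))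
          + ((a + b*(s:ℝ)) + (a + b*((s-2:ℕ):ℝ)) - 2*(a + b*((s-1:ℕ):ℝ))) := by
      simp only [hwdef]; ring
    rw [e, haff a b s h2, add_zero]
  have tfμh : tfObj n y lam μh = (1/2) * ∑ t ∈ range n, (y t - μh t)^2 + lam * P := by
    rw [tfObj, hpen]
  -- objective value of an affine function
  have tfaff : ∀ c d : ℝ,
      tfObj n y lam (fun t : ℕ => c + d*(t:ℝ))
        = (1/2) * ∑ t ∈ range n, (y t - (c + d*(t:ℝ)))^2 := by
    intro c d
    have hz : ∑ s ∈ Ico 2 n,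
        |(fun t : ℕ => c + d*(t:ℝ)) s + (fun t : ℕ => c + d*(t:ℝ)) (s-2)
          - 2*(fun t : ℕ => c + d*(t:ℝ)) (s-1)| = 0 := by
      refine Finset.sum_eq_zero (fun s hs => ?_)
      simp only
      rw [haff c d s (Finset.mem_Ico.mp hs).1, abs_zero]
    rw [tfObj, hz, mul_zero, add_zero]
  -- expansion of the squared loss
  set I : ℝ := ∑ t ∈ range n, y t * w t with hIdef
  have hexp : ∑ t ∈ range n, (y t - μh t)^2
      = ∑ t ∈ range n, (y t - (a + b*(t:ℝ)))^2 - 2*I + ∑ t ∈ range n, (w t)^2 := by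
    have e : ∀ t : ℕ, (y t - μh t)^2
        = ((y t - (a + b*(t:ℝ)))^2 - 2*(y t * w t) + (w t)^2) + 2*(w t * (a + b*(t:ℝ))) := by
      intro t; simp only [hwdef]; ring
    rw [Finset.sum_congr rfl (fun t _ => e t), Finset.sum_add_distrib]
    have h2 : ∑ x ∈ range n, 2*(w x * (a + b*(x:ℝ))) = 0 := by
      rw [← Finset.mul_sum, tf_ortho n w hw0 hw1 a b, mul_zero]
    rw [h2, add_zero, Finset.sum_add_distrib, Finset.sum_sub_distrib, ← Finset.mul_sum,
      ← hIdef]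
  set Sw : ℝ := ∑ t ∈ range n, (w t)^2 with hSwdef
  have hSwnn : 0 ≤ Sw := Finset.sum_nonneg (fun _ _ => sq_nonneg _)
  set N : ℝ := Real.sqrt Sw with hNdef
  have hNnn : 0 ≤ N := Real.sqrt_nonneg _
  have hN2 : N^2 = Sw := Real.sq_sqrt hSwnn
  -- Sw ≤ (∑|w|) * (n*P)
  have hb1 : Sw ≤ (∑ t ∈ range n, |w t|) * ((n:ℝ)*P) := by
    have horth : ∑ t ∈ range n, w t * (w 0 + (w 1 - w 0)*(t:ℝ)) = 0 :=
      tf_ortho n w hw0 hw1 _ _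
    have hSw : Sw = ∑ t ∈ range n, w t * (w t - (w 0 + (t:ℝ)*(w 1 - w 0))) := by
      have e : ∀ t : ℕ, w t * (w t - (w 0 + (t:ℝ)*(w 1 - w 0)))
          = (w t)^2 - w t * (w 0 + (w 1 - w 0)*(t:ℝ)) := by intro t; ring
      rw [Finset.sum_congr rfl (fun t _ => e t), Finset.sum_sub_distrib, horth, sub_zero]
    rw [hSw, Finset.sum_mul]
    refine Finset.sum_le_sum (fun t ht => ?_)
    calc w t * (w t - (w 0 + (t:ℝ)*(w 1 - w 0)))
        ≤ |w t * (w t - (w 0 + (t:ℝ)*(w 1 - w 0)))| := le_abs_self _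
      _ = |w t| * |w t - (w 0 + (t:ℝ)*(w 1 - w 0))| := abs_mul _ _
      _ ≤ |w t| * ((n:ℝ)*P) := by
          refine mul_le_mul_of_nonneg_left ?_ (abs_nonneg _)
          exact tf_rep_bound n w t (Finset.mem_range.mp ht)
  -- ∑|w| ≤ √n * N
  have habsnn : 0 ≤ ∑ t ∈ range n, |w t| := Finset.sum_nonneg (fun _ _ => abs_nonneg _)
  have hb2 : (∑ t ∈ range n, |w t|)^2 ≤ (n:ℝ) * Sw := by
    have h := Finset.sum_mul_sq_le_sq_mul_sq (range n) (fun _ => (1:ℝ)) (fun t => |w t|)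
    simpa [sq_abs, Finset.card_range] using h
  have hb2' : ∑ t ∈ range n, |w t| ≤ Real.sqrt n * N := by
    have h1 : ∑ t ∈ range n, |w t| = Real.sqrt ((∑ t ∈ range n, |w t|)^2) :=
      (Real.sqrt_sq habsnn).symm
    rw [h1, hNdef, ← Real.sqrt_mul (by positivity : (0:ℝ) ≤ (n:ℝ))]
    exact Real.sqrt_le_sqrt hb2
  -- N ≤ n √n P
  have hNle : N ≤ (n:ℝ) * Real.sqrt n * P := by
    have hKnn : 0 ≤ (n:ℝ) * Real.sqrt n * P := by positivity
    have hNN : N^2 ≤ ((n:ℝ) * Real.sqrt n * P) * N := by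
      calc N^2 = Sw := hN2
        _ ≤ (∑ t ∈ range n, |w t|) * ((n:ℝ)*P) := hb1
        _ ≤ (Real.sqrt n * N) * ((n:ℝ)*P) := by
            refine mul_le_mul_of_nonneg_right hb2' (by positivity)
        _ = ((n:ℝ) * Real.sqrt n * P) * N := by ring
    rcases eq_or_lt_of_le hNnn with h | h
    · rw [← h]; exact hKnn
    · nlinarith [hNN, h]
  -- |I| ≤ Y * N
  have hI : |I| ≤ Y * N := by
    have h := Finset.sum_mul_sq_le_sq_mul_sq (range n) y w
    have h1 : |I| = Real.sqrt (I^2) := (Real.sqrt_sq_eq_abs I).symm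
    have hSynn : 0 ≤ ∑ t ∈ range n, (y t)^2 := Finset.sum_nonneg (fun _ _ => sq_nonneg _)
    rw [h1, hYdef, hNdef, ← Real.sqrt_mul hSynn]
    exact Real.sqrt_le_sqrt (by simpa [hIdef] using h)
  -- the penalty vanishes
  have hP0 : P = 0 := by
    by_contra hne
    have hPpos : 0 < P := lt_of_le_of_ne hPnn (Ne.symm hne)
    have hcomp := hmin (fun t : ℕ => a + b*(t:ℝ))
    rw [tfμh, tfaff a b, hexp] at hcomp
    have hchain : lam * P ≤ ((n:ℝ) * Real.sqrt n * Y) * P := by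
      have c1 : lam * P ≤ I := by linarith
      have c2 : I ≤ Y * N := le_trans (le_abs_self I) hI
      have c3 : Y * N ≤ Y * ((n:ℝ) * Real.sqrt n * P) :=
        mul_le_mul_of_nonneg_left hNle hYnn
      nlinarith [c1, c2, c3]
    nlinarith [hchain, hPpos, hlam]
  -- μh is affine on range n
  have haffw : ∀ t, t < n → w t = w 0 + (t:ℝ)*(w 1 - w 0) := by
    intro t ht
    have h := tf_rep_bound n w t ht
    rw [← hPdef, hP0, mul_zero] at h
    have := abs_nonpos_iff.mp h
    linarith [sub_eq_zero.mp this]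
  refine ⟨a + w 0, b + (w 1 - w 0), ?_, ?_⟩
  · intro t ht
    have hμ : μh t = (a + b*(t:ℝ)) + w t := by simp only [hwdef]; ring
    rw [hμ, haffw t ht]; ring
  · intro a' b'
    have hcomp := hmin (fun t : ℕ => a' + b'*(t:ℝ))
    rw [tfμh, tfaff a' b', hP0, mul_zero, add_zero] at hcomp
    have heq : ∑ t ∈ range n, (y t - μh t)^2
        = ∑ t ∈ range n, (y t - ((a + w 0) + (b + (w 1 - w 0)) * (t:ℝ)))^2 := by
      refine Finset.sum_congr rfl (fun t ht => ?_)
      have hμ : μh t = (a + b*(t:ℝ)) + w t := by simp only [hwdef]; ring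
      rw [hμ, haffw t (Finset.mem_range.mp ht)]; ring_nf
    rw [heq] at hcomp
    linarith
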